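/- Let σ and α be permutations of {1, ..., n}, and suppose i, j, k are distinct points forming a 3-cycle (i,j,k) of α, all lying in the same orbit of σ (a 'double loop'). Then replacing (i,j,k) by fixed points does not change the number of orbits of the generated group: κ(σ, α·(i,k,j)) = κ(σ, α). -/

import Mathlib

/-- `κ(σ, β)`: the number of orbits of the subgroup generated by `σ` and `β`
acting on `{1, …, n}`. -/
noncomputable def kappa {n : ℕ} (σ β : Equiv.Perm (Fin n)) : ℕ :=
  Nat.card (MulAction.orbitRel.Quotient
    (Subgroup.closure ({σ, β} : Set (Equiv.Perm (Fin n)))) (Fin n))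

lemma closure_orbit_le {n : ℕ} (S : Set (Equiv.Perm (Fin n)))
    (G : Subgroup (Equiv.Perm (Fin n)))
    (h : ∀ s ∈ S, ∀ x : Fin n, s x ∈ MulAction.orbit G x) :
    ∀ g ∈ Subgroup.closure S, ∀ x : Fin n, g x ∈ MulAction.orbit G x := by
  have key : Subgroup.closure S ≤
      { carrier := {g | ∀ x : Fin n, g x ∈ MulAction.orbit G x}
        one_mem' := fun x => MulAction.mem_orbit_self x
        mul_mem' := by
          intro a b ha hb x
          have h1 : b x ∈ MulAction.orbit G x := hb x
          have h2 : a (b x) ∈ MulAction.orbit G (b x) := ha (b x)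
          rw [MulAction.orbit_eq_iff.mpr h1] at h2
          simpa using h2
        inv_mem' := by
          intro a ha x
          have h2 : a (a⁻¹ x) ∈ MulAction.orbit G (a⁻¹ x) := ha (a⁻¹ x)
          rw [← Equiv.Perm.mul_apply, mul_inv_cancel, Equiv.Perm.one_apply] at h2
          exact MulAction.mem_orbit_symm.mp h2 } := by
    rw [Subgroup.closure_le]
    intro s hs
    exact h s hs
  exact fun g hg x => key hg x

lemma mem_orbit_of_mem_closure {n : ℕ} (S : Set (Equiv.Perm (Fin n)))
    (g : Equiv.Perm (Fin n)) (hg : g ∈ Subgroup.closure S) (x : Fin n) :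
    g x ∈ MulAction.orbit (Subgroup.closure S) x := by
  have := MulAction.mem_orbit x (⟨g, hg⟩ : Subgroup.closure S)
  simpa using this

lemma zpow_mem_orbit {n : ℕ} (S : Set (Equiv.Perm (Fin n)))
    (σ : Equiv.Perm (Fin n)) (hσ : σ ∈ Subgroup.closure S) (m : ℤ) (x : Fin n) :
    (σ ^ m) x ∈ MulAction.orbit (Subgroup.closure S) x :=
  mem_orbit_of_mem_closure S (σ ^ m) (zpow_mem hσ m) x

/-- If `(i,j,k)` is a 3-cycle of `α` whose three points all lie in
the same cycle of `σ` (a double loop), then replacing `(i,j,k)` by fixed points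
(passing to `α' = α·(i,k,j)`) does not change the number of orbits:
`κ(σ, α') = κ(σ, α)`. -/
theorem kappa_eq_of_double_loop {n : ℕ} (σ α α' : Equiv.Perm (Fin n))
    (i j k : Fin n) (hij : i ≠ j) (hik : i ≠ k) (hjk : j ≠ k)
    (hcyc : α i = j ∧ α j = k ∧ α k = i)
    (hloop : σ.SameCycle i j ∧ σ.SameCycle i k)
    (hα' : α' i = i ∧ α' j = j ∧ α' k = k ∧
      ∀ x, x ≠ i → x ≠ j → x ≠ k → α' x = α x) :
    kappa σ α' = kappa σ α := by
  obtain ⟨hαi, hαj, hαk⟩ := hcyc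
  obtain ⟨hsij, hsik⟩ := hloop
  obtain ⟨hi', hj', hk', hother⟩ := hα'
  set G := Subgroup.closure ({σ, α} : Set (Equiv.Perm (Fin n))) with hG
  set G' := Subgroup.closure ({σ, α'} : Set (Equiv.Perm (Fin n))) with hG'
  have hσG : σ ∈ G := Subgroup.subset_closure (by simp)
  have hαG : α ∈ G := Subgroup.subset_closure (by simp)
  have hσG' : σ ∈ G' := Subgroup.subset_closure (by simp)
  have hα'G' : α' ∈ G' := Subgroup.subset_closure (by simp)
  -- forward: generators of G' move points within G-orbits
  have fwd : ∀ g ∈ G', ∀ x : Fin n, g x ∈ MulAction.orbit G x := by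
    apply closure_orbit_le
    intro s hs x
    rcases hs with rfl | hs
    · exact mem_orbit_of_mem_closure _ s hσG x
    · simp only [Set.mem_singleton_iff] at hs
      subst hs
      by_cases hxi : x = i
      · subst hxi; rw [hi']; exact MulAction.mem_orbit_self _
      by_cases hxj : x = j
      · subst hxj; rw [hj']; exact MulAction.mem_orbit_self _
      by_cases hxk : x = k
      · subst hxk; rw [hk']; exact MulAction.mem_orbit_self _
      · rw [hother x hxi hxj hxk]
        exact mem_orbit_of_mem_closure _ α hαG x
  have bwd : ∀ g ∈ G, ∀ x : Fin n, g x ∈ MulAction.orbit G' x := by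
    apply closure_orbit_le
    intro s hs x
    rcases hs with rfl | hs
    · exact mem_orbit_of_mem_closure _ s hσG' x
    · simp only [Set.mem_singleton_iff] at hs
      subst hs
      by_cases hxi : x = i
      · subst hxi; rw [hαi]
        obtain ⟨m, hm⟩ := hsij
        rw [← hm]
        exact zpow_mem_orbit _ σ hσG' m x
      by_cases hxj : x = j
      · subst hxj; rw [hαj]
        obtain ⟨m, hm⟩ := hsij.symm.trans hsik
        rw [← hm]
        exact zpow_mem_orbit _ σ hσG' m x
      by_cases hxk : x = k
      · subst hxk; rw [hαk]
        obtain ⟨m, hm⟩ := hsik.symm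
        rw [← hm]
        exact zpow_mem_orbit _ σ hσG' m x
      · rw [← hother x hxi hxj hxk]
        exact mem_orbit_of_mem_closure _ α' hα'G' x
  have hset : MulAction.orbitRel G' (Fin n) = MulAction.orbitRel G (Fin n) := by
    apply Setoid.ext
    intro x y
    show x ∈ MulAction.orbit G' y ↔ x ∈ MulAction.orbit G y
    constructor
    · rintro ⟨⟨g, hg⟩, rfl⟩
      exact fwd g hg y
    · rintro ⟨⟨g, hg⟩, rfl⟩
      exact bwd g hg y
  unfold kappa MulAction.orbitRel.Quotient
  rw [hset]
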